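/- Let f : \mathbb{R}\to\mathbb{C} be continuous, bounded, supported in \{|r| \ge 1\}, with f(r) \to 0 as r \to +\infty. Suppose additionally that f is C^2 on its support with f', f'' bounded and f'(r), f''(r) \to 0 as r \to +\infty. Then J_\eta := \int_{\mathbb{R}} e^{-is^2} f(s+\eta)\,ds \to 0 as \eta \to +\infty. -/

import Mathlib

open MeasureTheory intervalIntegral Set

lemma phi_norm (s : ℝ) : ‖Complex.exp (-Complex.I * (s:ℂ)^2)‖ = 1 := by
  rw [show ((s:ℂ))^2 = ((s^2 : ℝ):ℂ) by push_cast; ring]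
  rw [Complex.norm_exp]
  simp [Complex.mul_re, Complex.I_re, Complex.I_im, pow_two, Complex.mul_im]

lemma phi_cont : Continuous (fun s : ℝ => Complex.exp (-Complex.I * (s:ℂ)^2)) :=
  Complex.continuous_exp.comp (continuous_const.mul (Complex.continuous_ofReal.pow 2))

open Complex in
lemma ibp_alg (z A B C e : ℂ) (hz : z ≠ 0) :
    e * A - e * ((-1/4)*(C/z^2 - 3*B/z^3 + 3*A/z^4))
    = e * (-I*(2*z)) * ((I/2)*(A/z) - (-1/4)*(B/z^2 - A/z^3))
     + e * ((I/2)*((B*z - A*1)/z^2)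
       - (-1/4)*((C*z^2 - B*((2:ℕ)*z^(2-1)))/(z^2)^2 - (B*z^3 - A*((3:ℕ)*z^(3-1)))/(z^3)^2)) := by
  have hI : (Complex.I:ℂ)^2 = -1 := Complex.I_sq
  field_simp [hz]
  push_cast
  linear_combination (8*e*A*z^6) * hI

lemma ibp_core (g g₁ g₂ : ℝ → ℂ) (a b m ε : ℝ) (hab : a ≤ b) (hm : 1 ≤ m)
    (hmem : ∀ s ∈ Set.Icc a b, m ≤ |s|)
    (hg₁ : ∀ s ∈ Set.Icc a b, HasDerivAt g (g₁ s) s)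
    (hg₂ : ∀ s ∈ Set.Icc a b, HasDerivAt g₁ (g₂ s) s)
    (hg₂c : ContinuousOn g₂ (Set.Icc a b))
    (hge : ∀ s ∈ Set.Icc a b, ‖g s‖ ≤ ε)
    (hg₁e : ∀ s ∈ Set.Icc a b, ‖g₁ s‖ ≤ ε)
    (hg₂e : ∀ s ∈ Set.Icc a b, ‖g₂ s‖ ≤ ε) :
    ‖∫ s in a..b, Complex.exp (-Complex.I * (s:ℂ)^2) * g s‖ ≤ 4 * ε / m := by
  have hm0 : (0:ℝ) < m := lt_of_lt_of_le one_pos hm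
  have hε : 0 ≤ ε := le_trans (norm_nonneg _) (hge a ⟨le_refl a, hab⟩)
  have hsne : ∀ s ∈ Set.Icc a b, s ≠ 0 := by
    intro s hs h
    have := hmem s hs; rw [h] at this; simp at this; linarith
  have hne : ∀ s ∈ Set.Icc a b, (s:ℂ) ≠ 0 := by
    intro s hs
    simpa using hsne s hs
  set φ : ℝ → ℂ := fun s => Complex.exp (-Complex.I * (s:ℂ)^2) with hφ
  set p : ℝ → ℂ := fun s => (Complex.I/2) * (g s / (s:ℂ)) with hp
  set q : ℝ → ℂ := fun s => (-(1:ℂ)/4) * (g₁ s / (s:ℂ)^2 - g s / (s:ℂ)^3) with hq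
  set Q : ℝ → ℂ := fun s => (-(1:ℂ)/4) * (g₂ s / (s:ℂ)^2 - 3*g₁ s / (s:ℂ)^3 + 3*g s / (s:ℂ)^4) with hQ
  set F : ℝ → ℂ := fun s => φ s * (p s - q s) with hF
  have hpow : ∀ (n:ℕ) (s:ℝ), HasDerivAt (fun t:ℝ => (t:ℂ)^n) (n*(s:ℂ)^(n-1)) s :=
    fun n s => (hasDerivAt_pow n ((s:ℂ))).comp_ofReal
  have hre : ∀ s : ℝ, HasDerivAt (fun t:ℝ => (t:ℂ)) 1 s := by
    intro s
    simpa using (hasDerivAt_id s).ofReal_comp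
  have hφd : ∀ s : ℝ, HasDerivAt φ (φ s * (-Complex.I * (2*(s:ℂ)))) s := by
    intro s
    apply HasDerivAt.cexp
    have := (hpow 2 s).const_mul (-Complex.I)
    convert this using 1
    · rfl
    push_cast; ring
  have hFd : ∀ s ∈ Set.Icc a b, HasDerivAt F (φ s * g s - φ s * Q s) s := by
    intro s hs
    have h0 := hne s hs
    have hpd := ((hg₁ s hs).div (hre s) h0).const_mul (Complex.I/2)
    have hqd := (((hg₂ s hs).div (hpow 2 s) (pow_ne_zero 2 h0)).sub
        ((hg₁ s hs).div (hpow 3 s) (pow_ne_zero 3 h0))).const_mul (-(1:ℂ)/4)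
    have hmul := (hφd s).mul (hpd.sub hqd)
    convert hmul using 1
    · rfl
    · rfl
    simp only [hQ]
    exact ibp_alg (s:ℂ) (g s) (g₁ s) (g₂ s) (φ s) h0
  have hgc : ContinuousOn g (Set.Icc a b) := fun s hs => ((hg₁ s hs).continuousAt).continuousWithinAt
  have hg₁c : ContinuousOn g₁ (Set.Icc a b) := fun s hs => ((hg₂ s hs).continuousAt).continuousWithinAt
  have hφc : Continuous φ :=
    Complex.continuous_exp.comp (continuous_const.mul (Complex.continuous_ofReal.pow 2))
  have hQc : ContinuousOn Q (Set.Icc a b) := by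
    apply ContinuousOn.mul continuousOn_const
    apply ContinuousOn.add
    · apply ContinuousOn.sub
      · exact hg₂c.div ((Complex.continuous_ofReal.pow 2).continuousOn) (fun s hs => pow_ne_zero 2 (hne s hs))
      · exact (continuousOn_const.mul hg₁c).div ((Complex.continuous_ofReal.pow 3).continuousOn) (fun s hs => pow_ne_zero 3 (hne s hs))
    · exact (continuousOn_const.mul hgc).div ((Complex.continuous_ofReal.pow 4).continuousOn) (fun s hs => pow_ne_zero 4 (hne s hs))
  have hintQ : IntervalIntegrable (fun s => φ s * Q s) volume a b := by
    apply ContinuousOn.intervalIntegrable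
    rw [Set.uIcc_of_le hab]
    exact (hφc.continuousOn).mul hQc
  have hintg : IntervalIntegrable (fun s => φ s * g s) volume a b := by
    apply ContinuousOn.intervalIntegrable
    rw [Set.uIcc_of_le hab]
    exact (hφc.continuousOn).mul hgc
  have key : ∫ s in a..b, (φ s * g s - φ s * Q s) = F b - F a := by
    apply intervalIntegral.integral_eq_sub_of_hasDerivAt
    · rw [Set.uIcc_of_le hab]; exact hFd
    · exact hintg.sub hintQ
  have hsplit : (∫ s in a..b, φ s * g s) = (F b - F a) + ∫ s in a..b, φ s * Q s := by
    have h := intervalIntegral.integral_sub hintg hintQ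
    rw [key] at h
    linear_combination -h
  have habs : ∀ s : ℝ, ‖φ s‖ = 1 := by
    intro s
    rw [hφ]
    simp only
    rw [show ((s:ℂ))^2 = ((s^2 : ℝ):ℂ) by push_cast; ring]
    rw [Complex.norm_exp]
    simp [Complex.mul_re, Complex.I_re, Complex.I_im, pow_two, Complex.mul_im]
  have hcast : ∀ s : ℝ, ‖(s:ℂ)‖ = |s| := fun s => by
    simp [Complex.norm_real]
  have hFb : ∀ x ∈ Set.Icc a b, ‖F x‖ ≤ ε / m := by
    intro x hx
    have hxm : m ≤ |x| := hmem x hx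
    have hx1 : 1 ≤ |x| := le_trans hm hxm
    have hx0 : 0 < |x| := lt_of_lt_of_le hm0 hxm
    rw [hF]
    simp only
    rw [norm_mul, habs, one_mul]
    have hpb : ‖p x‖ ≤ ε / (2*m) := by
      rw [hp]; simp only
      simp only [norm_mul, norm_div, hcast, Complex.norm_I]
      have h2 : ‖(2:ℂ)‖ = (2:ℝ) := by norm_num
      rw [h2]
      have : ‖g x‖ / |x| ≤ ε / m := div_le_div₀ hε (hge x hx) hm0 hxm
      calc (1:ℝ)/2 * (‖g x‖ / |x|) ≤ 1/2 * (ε/m) := by linarith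
        _ = ε / (2*m) := by ring
    have hqb : ‖q x‖ ≤ ε / (2*m) := by
      rw [hq]; simp only
      rw [norm_mul]
      have h1 : ‖(-(1:ℂ)/4)‖ = 1/4 := by norm_num
      rw [h1]
      have h2 : ‖g₁ x / (x:ℂ)^2 - g x / (x:ℂ)^3‖ ≤ ‖g₁ x‖/|x|^2 + ‖g x‖/|x|^3 := by
        refine le_trans (norm_sub_le _ _) ?_
        simp only [norm_div, norm_pow, hcast]
        exact le_refl _
      have h3 : ‖g₁ x‖/|x|^2 ≤ ε/m := by
        refine div_le_div₀ hε (hg₁e x hx) hm0 ?_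
        calc m ≤ |x| := hxm
          _ = |x|^1 := (pow_one _).symm
          _ ≤ |x|^2 := pow_le_pow_right₀ hx1 (by norm_num)
      have h4 : ‖g x‖/|x|^3 ≤ ε/m := by
        refine div_le_div₀ hε (hge x hx) hm0 ?_
        calc m ≤ |x| := hxm
          _ = |x|^1 := (pow_one _).symm
          _ ≤ |x|^3 := pow_le_pow_right₀ hx1 (by norm_num)
      calc (1:ℝ)/4 * ‖g₁ x / (x:ℂ)^2 - g x / (x:ℂ)^3‖ ≤ 1/4 * (ε/m + ε/m) := by
            refine mul_le_mul_of_nonneg_left (le_trans h2 (by linarith)) (by norm_num)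
        _ = ε / (2*m) := by ring
    calc ‖p x - q x‖ ≤ ‖p x‖ + ‖q x‖ := norm_sub_le _ _
      _ ≤ ε/(2*m) + ε/(2*m) := add_le_add hpb hqb
      _ = ε / m := by field_simp; ring
  have hQb : ∀ s ∈ Set.Icc a b, ‖φ s * Q s‖ ≤ (7*ε/4) * (s^2)⁻¹ := by
    intro s hs
    have hsm : m ≤ |s| := hmem s hs
    have hs1 : 1 ≤ |s| := le_trans hm hsm
    have hs0 : 0 < |s| := lt_of_lt_of_le hm0 hsm
    have hs2 : (0:ℝ) < |s|^2 := by positivity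
    have hsq : |s|^2 = s^2 := sq_abs s
    rw [norm_mul, habs, one_mul, hQ]
    simp only
    rw [norm_mul]
    have h1 : ‖(-(1:ℂ)/4)‖ = 1/4 := by norm_num
    rw [h1]
    have e2 : ‖g₂ s / (s:ℂ)^2‖ ≤ ε / s^2 := by
      simp only [norm_div, norm_pow, hcast]
      rw [← hsq]
      exact div_le_div₀ hε (hg₂e s hs) hs2 (le_refl _)
    have e1 : ‖3*g₁ s / (s:ℂ)^3‖ ≤ 3*ε / s^2 := by
      simp only [norm_div, norm_mul, norm_pow, hcast]
      have hn3 : ‖(3:ℂ)‖ = 3 := by norm_num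
      rw [hn3, ← hsq]
      refine div_le_div₀ (by positivity) (by nlinarith [hg₁e s hs, norm_nonneg (g₁ s)]) hs2 ?_
      calc |s|^2 ≤ |s|^3 := pow_le_pow_right₀ hs1 (by norm_num)
        _ = |s|^3 := rfl
    have e0 : ‖3*g s / (s:ℂ)^4‖ ≤ 3*ε / s^2 := by
      simp only [norm_div, norm_mul, norm_pow, hcast]
      have hn3 : ‖(3:ℂ)‖ = 3 := by norm_num
      rw [hn3, ← hsq]
      refine div_le_div₀ (by positivity) (by nlinarith [hge s hs, norm_nonneg (g s)]) hs2 ?_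
      calc |s|^2 ≤ |s|^4 := pow_le_pow_right₀ hs1 (by norm_num)
        _ = |s|^4 := rfl
    have hsum : ‖g₂ s / (s:ℂ)^2 - 3*g₁ s / (s:ℂ)^3 + 3*g s / (s:ℂ)^4‖ ≤ 7*ε/s^2 := by
      calc ‖g₂ s / (s:ℂ)^2 - 3*g₁ s / (s:ℂ)^3 + 3*g s / (s:ℂ)^4‖
          ≤ ‖g₂ s / (s:ℂ)^2 - 3*g₁ s / (s:ℂ)^3‖ + ‖3*g s / (s:ℂ)^4‖ := norm_add_le _ _
        _ ≤ (‖g₂ s / (s:ℂ)^2‖ + ‖3*g₁ s / (s:ℂ)^3‖) + ‖3*g s / (s:ℂ)^4‖ := by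
            gcongr; exact norm_sub_le _ _
        _ ≤ (ε/s^2 + 3*ε/s^2) + 3*ε/s^2 := by gcongr <;> assumption
        _ = 7*ε/s^2 := by ring
    calc (1:ℝ)/4 * ‖g₂ s / (s:ℂ)^2 - 3*g₁ s / (s:ℂ)^3 + 3*g s / (s:ℂ)^4‖
        ≤ 1/4 * (7*ε/s^2) := by linarith [hsum, norm_nonneg (g₂ s / (s:ℂ)^2 - 3*g₁ s / (s:ℂ)^3 + 3*g s / (s:ℂ)^4)]
      _ = (7*ε/4) * (s^2)⁻¹ := by field_simp
  have hcase : 0 < a ∨ b < 0 := by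
    by_contra h
    push_neg at h
    have h0 : (0:ℝ) ∈ Set.Icc a b := ⟨h.1, h.2⟩
    have := hmem 0 h0
    simp at this
    linarith
  have hinv : a⁻¹ - b⁻¹ ≤ m⁻¹ ∧ 0 ≤ a⁻¹ - b⁻¹ := by
    rcases hcase with h | h
    · have hma : m ≤ a := by
        have := hmem a ⟨le_refl a, hab⟩
        rwa [abs_of_pos h] at this
      have hb0 : 0 < b := lt_of_lt_of_le h hab
      constructor
      · have h1 : a⁻¹ ≤ m⁻¹ := by
          apply inv_anti₀ hm0 hma
        have h2 : 0 < b⁻¹ := by positivity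
        linarith
      · have := one_div_le_one_div_of_le h hab
        simp only [one_div] at this
        linarith
    · have hmb : m ≤ -b := by
        have := hmem b ⟨hab, le_refl b⟩
        rwa [abs_of_neg h] at this
      have ha0 : a < 0 := lt_of_le_of_lt hab h
      constructor
      · have h1 : (-b)⁻¹ ≤ m⁻¹ := inv_anti₀ hm0 hmb
        have h2 : a⁻¹ < 0 := inv_lt_zero.mpr ha0
        rw [inv_neg] at h1
        linarith
      · have := one_div_le_one_div_of_le (by linarith : (0:ℝ) < -b) (by linarith : -b ≤ -a)
        simp only [one_div, inv_neg] at this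
        linarith
  have hBint : IntervalIntegrable (fun s : ℝ => (7*ε/4) * (s^2)⁻¹) volume a b := by
    apply ContinuousOn.intervalIntegrable
    rw [Set.uIcc_of_le hab]
    exact continuousOn_const.mul (((continuousOn_id).pow 2).inv₀
      (fun s hs => pow_ne_zero 2 (hsne s hs)))
  have hBval : ∫ s in a..b, (7*ε/4) * (s^2)⁻¹ = (7*ε/4) * (a⁻¹ - b⁻¹) := by
    have : ∫ s in a..b, (7*ε/4) * (s^2)⁻¹ = (7*ε/4) * (-b⁻¹) - (7*ε/4) * (-a⁻¹) := by
      apply intervalIntegral.integral_eq_sub_of_hasDerivAt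
      · intro x hx
        rw [Set.uIcc_of_le hab] at hx
        have hx0 : x ≠ 0 := hsne x hx
        have := ((hasDerivAt_inv hx0).neg).const_mul ((7:ℝ)*ε/4)
        simpa using this
      · exact hBint
    rw [this]; ring
  have hIQ : ‖∫ s in a..b, φ s * Q s‖ ≤ (7*ε/4) * m⁻¹ := by
    have h1 : ‖∫ s in a..b, φ s * Q s‖ ≤ |∫ s in a..b, (7*ε/4) * (s^2)⁻¹| := by
      apply intervalIntegral.norm_integral_le_abs_of_norm_le _ hBint
      apply MeasureTheory.ae_restrict_of_forall_mem measurableSet_uIoc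
      intro t ht
      rw [Set.uIoc_of_le hab] at ht
      exact hQb t ⟨le_of_lt ht.1, ht.2⟩
    rw [hBval] at h1
    have h2 : _root_.abs ((7*ε/4) * (a⁻¹ - b⁻¹)) = (7*ε/4) * (a⁻¹ - b⁻¹) :=
      abs_of_nonneg (mul_nonneg (by positivity) hinv.2)
    rw [h2] at h1
    calc ‖∫ s in a..b, φ s * Q s‖ ≤ (7*ε/4) * (a⁻¹ - b⁻¹) := h1
      _ ≤ (7*ε/4) * m⁻¹ := mul_le_mul_of_nonneg_left hinv.1 (by positivity)
  rw [hsplit]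
  have hεm : (0:ℝ) ≤ ε/m := div_nonneg hε hm0.le
  calc ‖F b - F a + ∫ s in a..b, φ s * Q s‖
      ≤ ‖F b - F a‖ + ‖∫ s in a..b, φ s * Q s‖ := norm_add_le _ _
    _ ≤ (‖F b‖ + ‖F a‖) + (7*ε/4) * m⁻¹ := add_le_add (norm_sub_le _ _) hIQ
    _ ≤ (ε/m + ε/m) + (7*ε/4) * m⁻¹ := by
        gcongr <;> [exact hFb b ⟨hab, le_refl b⟩; exact hFb a ⟨le_refl a, hab⟩]
    _ ≤ 4 * ε / m := by
        have : (ε/m + ε/m) + (7*ε/4) * m⁻¹ = (15/4) * (ε/m) := by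
          field_simp; ring
        rw [this]
        rw [show (4:ℝ) * ε / m = 4 * (ε/m) by ring]
        linarith

lemma ibp_open (g g₁ g₂ : ℝ → ℂ) (a b m ε : ℝ) (hab : a ≤ b) (hm : 1 ≤ m)
    (hmem : ∀ s ∈ Set.Icc a b, m ≤ |s|)
    (hgc : ContinuousOn g (Set.Icc a b))
    (hg₁ : ∀ s ∈ Set.Ioo a b, HasDerivAt g (g₁ s) s)
    (hg₂ : ∀ s ∈ Set.Ioo a b, HasDerivAt g₁ (g₂ s) s)
    (hg₂c : ContinuousOn g₂ (Set.Ioo a b))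
    (hge : ∀ s ∈ Set.Icc a b, ‖g s‖ ≤ ε)
    (hg₁e : ∀ s ∈ Set.Ioo a b, ‖g₁ s‖ ≤ ε)
    (hg₂e : ∀ s ∈ Set.Ioo a b, ‖g₂ s‖ ≤ ε) :
    ‖∫ s in a..b, Complex.exp (-Complex.I * (s:ℂ)^2) * g s‖ ≤ 4 * ε / m := by
  have hm0 : (0:ℝ) < m := lt_of_lt_of_le one_pos hm
  have hε : 0 ≤ ε := le_trans (norm_nonneg _) (hge a ⟨le_refl a, hab⟩)
  rcases eq_or_lt_of_le hab with heq | hlt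
  · subst heq
    simp only [intervalIntegral.integral_same, norm_zero]
    positivity
  apply le_of_forall_pos_le_add
  intro ε' hε'
  set δ : ℝ := min ((b-a)/4) (ε'/(2*(ε+1))) with hδdef
  have hδ0 : 0 < δ := lt_min (by linarith) (by positivity)
  have hδ1 : δ ≤ (b-a)/4 := min_le_left _ _
  have hδ2 : δ ≤ ε'/(2*(ε+1)) := min_le_right _ _
  have hord : a + δ ≤ b - δ := by linarith
  have hsub : Set.Icc (a+δ) (b-δ) ⊆ Set.Ioo a b := fun x hx =>
    ⟨by linarith [hx.1], by linarith [hx.2]⟩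
  have hsubc : Set.Icc (a+δ) (b-δ) ⊆ Set.Icc a b := fun x hx =>
    ⟨by linarith [hx.1], by linarith [hx.2]⟩
  have hcore : ‖∫ s in (a+δ)..(b-δ), Complex.exp (-Complex.I * (s:ℂ)^2) * g s‖ ≤ 4 * ε / m :=
    ibp_core g g₁ g₂ (a+δ) (b-δ) m ε hord hm
      (fun s hs => hmem s (hsubc hs))
      (fun s hs => hg₁ s (hsub hs))
      (fun s hs => hg₂ s (hsub hs))
      (hg₂c.mono hsub)
      (fun s hs => hge s (hsubc hs))
      (fun s hs => hg₁e s (hsub hs))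
      (fun s hs => hg₂e s (hsub hs))
  have hφg : ContinuousOn (fun s : ℝ => Complex.exp (-Complex.I * (s:ℂ)^2) * g s) (Set.Icc a b) :=
    (phi_cont.continuousOn).mul hgc
  have hii : ∀ c d : ℝ, a ≤ c → c ≤ d → d ≤ b →
      IntervalIntegrable (fun s : ℝ => Complex.exp (-Complex.I * (s:ℂ)^2) * g s) volume c d := by
    intro c d hc hcd hd
    apply ContinuousOn.intervalIntegrable
    apply hφg.mono
    rw [Set.uIcc_of_le hcd]
    exact fun x hx => ⟨le_trans hc hx.1, le_trans hx.2 hd⟩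
  have hsplit : (∫ s in a..b, Complex.exp (-Complex.I * (s:ℂ)^2) * g s)
      = (∫ s in a..(a+δ), Complex.exp (-Complex.I * (s:ℂ)^2) * g s)
      + (∫ s in (a+δ)..(b-δ), Complex.exp (-Complex.I * (s:ℂ)^2) * g s)
      + (∫ s in (b-δ)..b, Complex.exp (-Complex.I * (s:ℂ)^2) * g s) := by
    rw [intervalIntegral.integral_add_adjacent_intervals
      (hii a (a+δ) (le_refl a) (by linarith) (by linarith))
      (hii (a+δ) (b-δ) (by linarith) hord (by linarith))]
    rw [intervalIntegral.integral_add_adjacent_intervals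
      (hii a (b-δ) (le_refl a) (by linarith) (by linarith))
      (hii (b-δ) b (by linarith) (by linarith) (le_refl b))]
  have hbd : ∀ c d : ℝ, a ≤ c → c ≤ d → d ≤ b →
      ‖∫ s in c..d, Complex.exp (-Complex.I * (s:ℂ)^2) * g s‖ ≤ ε * (d - c) := by
    intro c d hc hcd hd
    have := intervalIntegral.norm_integral_le_of_norm_le_const
      (C := ε) (a := c) (b := d)
      (f := fun s : ℝ => Complex.exp (-Complex.I * (s:ℂ)^2) * g s) ?_
    · rwa [abs_of_nonneg (by linarith)] at this
    · intro x hx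
      rw [Set.uIoc_of_le hcd] at hx
      rw [norm_mul, phi_norm, one_mul]
      exact hge x ⟨le_trans hc (le_of_lt hx.1), le_trans hx.2 hd⟩
  rw [hsplit]
  have h1 := hbd a (a+δ) (le_refl a) (by linarith) (by linarith)
  have h3 := hbd (b-δ) b (by linarith) (by linarith) (le_refl b)
  have hδε : 2 * (ε * δ) ≤ ε' := by
    have h4 : ε * δ ≤ ε * (ε'/(2*(ε+1))) := mul_le_mul_of_nonneg_left hδ2 hε
    have h5 : ε * (ε'/(2*(ε+1))) ≤ ε'/2 := by
      rw [mul_comm, div_mul_eq_mul_div, div_le_div_iff₀ (by positivity) (by norm_num)]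
      nlinarith
    linarith
  set I1 := ∫ s in a..(a+δ), Complex.exp (-Complex.I * (s:ℂ)^2) * g s with hI1
  set I2 := ∫ s in (a+δ)..(b-δ), Complex.exp (-Complex.I * (s:ℂ)^2) * g s with hI2
  set I3 := ∫ s in (b-δ)..b, Complex.exp (-Complex.I * (s:ℂ)^2) * g s with hI3
  calc ‖I1 + I2 + I3‖ ≤ ‖I1 + I2‖ + ‖I3‖ := norm_add_le _ _
    _ ≤ ‖I1‖ + ‖I2‖ + ‖I3‖ := add_le_add_left (norm_add_le _ _) _
    _ ≤ ε * (a + δ - a) + (4 * ε / m) + ε * (b - (b - δ)) :=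
        add_le_add (add_le_add h1 hcore) h3
    _ ≤ 4 * ε / m + ε' := by
        have : ε * (a + δ - a) + ε * (b - (b-δ)) = 2*(ε*δ) := by ring
        linarith

open Filter

theorem stmt12 (f : ℝ → ℂ) (hf : Continuous f)
    (hfb : ∃ C : ℝ, ∀ r : ℝ, ‖f r‖ ≤ C)
    (hsupp : ∀ r : ℝ, |r| < 1 → f r = 0)
    (hf0 : Tendsto f atTop (nhds 0))
    (hf2 : ContDiffOn ℝ 2 f {r : ℝ | 1 ≤ |r|})
    (hf'b : ∃ C : ℝ, ∀ r : ℝ, ‖deriv f r‖ ≤ C)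
    (hf''b : ∃ C : ℝ, ∀ r : ℝ, ‖deriv (deriv f) r‖ ≤ C)
    (hf'0 : Tendsto (deriv f) atTop (nhds 0))
    (hf''0 : Tendsto (deriv (deriv f)) atTop (nhds 0))
    (J : ℝ → ℂ)
    (hJ : ∀ η : ℝ, Tendsto
      (fun R : ℝ => ∫ s in (-R)..R, Complex.exp (-Complex.I * (s : ℂ) ^ 2) * f (s + η))
      atTop (nhds (J η))) :
    Tendsto J atTop (nhds 0) := by
  -- support fact up to the boundary
  have hsupp' : ∀ r : ℝ, |r| ≤ 1 → f r = 0 := by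
    have h1 : Set.EqOn f 0 (Set.Ioo (-1:ℝ) 1) := by
      intro r hr
      exact hsupp r (abs_lt.mpr ⟨hr.1, hr.2⟩)
    have h2 := h1.closure hf continuous_const
    rw [closure_Ioo (by norm_num : (-1:ℝ) ≠ 1)] at h2
    intro r hr
    exact h2 ⟨(abs_le.mp hr).1, (abs_le.mp hr).2⟩
  -- smoothness on the open set U
  set U : Set ℝ := {r : ℝ | 1 < |r|} with hUdef
  have hU : IsOpen U := isOpen_lt continuous_const continuous_abs
  have hUmem : ∀ x : ℝ, x < -1 ∨ 1 < x → x ∈ U := by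
    intro x hx
    rcases hx with h | h
    · simp only [hUdef, Set.mem_setOf_eq]; rw [abs_of_neg (by linarith)]; linarith
    · simp only [hUdef, Set.mem_setOf_eq]; rw [abs_of_pos (by linarith)]; linarith
  have hC2U : ContDiffOn ℝ 2 f U := hf2.mono (fun r hr => le_of_lt (show (1:ℝ) < |r| from hr))
  have hd1 : ∀ r ∈ U, HasDerivAt f (deriv f r) r := by
    intro r hr
    exact ((hC2U.differentiableOn (by norm_num)).differentiableAt (hU.mem_nhds hr)).hasDerivAt
  have hC1d : ContDiffOn ℝ 1 (deriv f) U := hC2U.deriv_of_isOpen hU (by norm_num)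
  have hd2 : ∀ r ∈ U, HasDerivAt (deriv f) (deriv (deriv f) r) r := by
    intro r hr
    exact ((hC1d.differentiableOn (by norm_num)).differentiableAt (hU.mem_nhds hr)).hasDerivAt
  have hc2 : ContinuousOn (deriv (deriv f)) U :=
    hC1d.continuousOn_deriv_of_isOpen hU (le_refl _)
  -- uniform bound M
  obtain ⟨C0, hC0⟩ := hfb
  obtain ⟨C1, hC1⟩ := hf'b
  obtain ⟨C2, hC2⟩ := hf''b
  set M : ℝ := max 1 (max C0 (max C1 C2)) with hMdef
  have hM1 : 1 ≤ M := le_max_left _ _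
  have hM0 : 0 < M := lt_of_lt_of_le one_pos hM1
  have hMf : ∀ r : ℝ, ‖f r‖ ≤ M := fun r =>
    le_trans (hC0 r) (le_trans (le_max_left _ _) (le_max_right _ _))
  have hMf1 : ∀ r : ℝ, ‖deriv f r‖ ≤ M := fun r =>
    le_trans (hC1 r) (le_trans (le_trans (le_max_left _ _) (le_max_right _ _)) (le_max_right _ _))
  have hMf2 : ∀ r : ℝ, ‖deriv (deriv f) r‖ ≤ M := fun r =>
    le_trans (hC2 r) (le_trans (le_trans (le_max_right _ _) (le_max_right _ _)) (le_max_right _ _))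
  rw [NormedAddCommGroup.tendsto_nhds_zero]
  intro ε hε
  set ε' : ℝ := ε/40 with hε'def
  have hε'0 : 0 < ε' := by positivity
  obtain ⟨N0, hN0⟩ := Metric.tendsto_atTop.mp hf0 ε' hε'0
  obtain ⟨N1, hN1⟩ := Metric.tendsto_atTop.mp hf'0 ε' hε'0
  obtain ⟨N2, hN2⟩ := Metric.tendsto_atTop.mp hf''0 ε' hε'0
  set η₀ : ℝ := max 1 (max N0 (max N1 N2)) with hη₀def
  have hη₀1 : 1 ≤ η₀ := le_max_left _ _
  have hsmall : ∀ r : ℝ, η₀ ≤ r →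
      ‖f r‖ ≤ ε' ∧ ‖deriv f r‖ ≤ ε' ∧ ‖deriv (deriv f) r‖ ≤ ε' := by
    intro r hr
    refine ⟨?_, ?_, ?_⟩
    · have := hN0 r (le_trans (le_trans (le_max_left _ _) (le_max_right _ _)) hr)
      rw [dist_eq_norm, sub_zero] at this; linarith
    · have := hN1 r (le_trans (le_trans (le_trans (le_max_left _ _) (le_max_right _ _)) (le_max_right _ _)) hr)
      rw [dist_eq_norm, sub_zero] at this; linarith
    · have := hN2 r (le_trans (le_trans (le_trans (le_max_right _ _) (le_max_right _ _)) (le_max_right _ _)) hr)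
      rw [dist_eq_norm, sub_zero] at this; linarith
  rw [eventually_atTop]
  refine ⟨max (2*η₀ + 4) (48*M/ε), ?_⟩
  intro η hη
  have hη1 : 2*η₀ + 4 ≤ η := le_trans (le_max_left _ _) hη
  have hη2 : 48*M/ε ≤ η := le_trans (le_max_right _ _) hη
  have hη6 : 6 ≤ η := by linarith
  have hη0 : 0 < η := by linarith
  -- the uniform bound on truncated integrals
  have hIbound : ∀ R : ℝ, η + 1 ≤ R →
      ‖∫ s in (-R)..R, Complex.exp (-Complex.I * (s:ℂ)^2) * f (s + η)‖ ≤ 12*M/η + 10*ε' := by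
    intro R hR
    set g : ℝ → ℂ := fun s => f (s + η) with hgdef
    set g₁ : ℝ → ℂ := fun s => deriv f (s + η) with hg₁def
    set g₂ : ℝ → ℂ := fun s => deriv (deriv f) (s + η) with hg₂def
    have hdg : ∀ s : ℝ, s + η ∈ U → HasDerivAt g (g₁ s) s := fun s hs =>
      HasDerivAt.comp_add_const s η (hd1 _ hs)
    have hdg₁ : ∀ s : ℝ, s + η ∈ U → HasDerivAt g₁ (g₂ s) s := fun s hs =>
      HasDerivAt.comp_add_const s η (hd2 _ hs)
    have hgc : Continuous g := hf.comp (continuous_id.add continuous_const)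
    have hg₂cc : ∀ (A : Set ℝ), (∀ s ∈ A, s + η ∈ U) → ContinuousOn g₂ A := by
      intro A hA
      exact hc2.comp ((continuous_id.add continuous_const).continuousOn) hA
    have hint : ∀ a b : ℝ, IntervalIntegrable
        (fun s : ℝ => Complex.exp (-Complex.I * (s:ℂ)^2) * g s) MeasureTheory.volume a b :=
      fun a b => (phi_cont.mul hgc).intervalIntegrable a b
    -- piece bounds
    have hP1 : ‖∫ s in (-R)..(-1-η), Complex.exp (-Complex.I * (s:ℂ)^2) * g s‖ ≤ 4*M/η := by
      have h := ibp_open g g₁ g₂ (-R) (-1-η) (1+η) M (by linarith) (by linarith)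
        (fun s hs => by rw [abs_of_neg (by linarith [hs.2])]; linarith [hs.2])
        (hgc.continuousOn)
        (fun s hs => hdg s (hUmem _ (Or.inl (by linarith [hs.2]))))
        (fun s hs => hdg₁ s (hUmem _ (Or.inl (by linarith [hs.2]))))
        (hg₂cc _ (fun s hs => hUmem _ (Or.inl (by linarith [hs.2]))))
        (fun s _ => hMf _) (fun s _ => hMf1 _) (fun s _ => hMf2 _)
      refine le_trans h ?_
      apply div_le_div_of_nonneg_left (by positivity) hη0 (by linarith)
    have hP2 : (∫ s in (-1-η)..(1-η), Complex.exp (-Complex.I * (s:ℂ)^2) * g s) = 0 := by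
      rw [intervalIntegral.integral_congr (g := fun _ => (0:ℂ)) ?_, intervalIntegral.integral_zero]
      intro s hs
      rw [Set.uIcc_of_le (by linarith)] at hs
      have : |s + η| ≤ 1 := abs_le.mpr ⟨by linarith [hs.1], by linarith [hs.2]⟩
      simp only [hgdef]
      rw [hsupp' _ this, mul_zero]
    have hP3 : ‖∫ s in (1-η)..(-η/2), Complex.exp (-Complex.I * (s:ℂ)^2) * g s‖ ≤ 8*M/η := by
      have h := ibp_open g g₁ g₂ (1-η) (-η/2) (η/2) M (by linarith) (by linarith)
        (fun s hs => by rw [abs_of_neg (by linarith [hs.2])]; linarith [hs.2])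
        (hgc.continuousOn)
        (fun s hs => hdg s (hUmem _ (Or.inr (by linarith [hs.1]))))
        (fun s hs => hdg₁ s (hUmem _ (Or.inr (by linarith [hs.1]))))
        (hg₂cc _ (fun s hs => hUmem _ (Or.inr (by linarith [hs.1]))))
        (fun s _ => hMf _) (fun s _ => hMf1 _) (fun s _ => hMf2 _)
      refine le_trans h (le_of_eq ?_)
      field_simp
      ring
    have hP4 : ‖∫ s in (-η/2)..(-1), Complex.exp (-Complex.I * (s:ℂ)^2) * g s‖ ≤ 4*ε' := by
      have h := ibp_open g g₁ g₂ (-η/2) (-1) 1 ε' (by linarith) (le_refl 1)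
        (fun s hs => by rw [abs_of_neg (by linarith [hs.2])]; linarith [hs.2])
        (hgc.continuousOn)
        (fun s hs => hdg s (hUmem _ (Or.inr (by linarith [hs.1]))))
        (fun s hs => hdg₁ s (hUmem _ (Or.inr (by linarith [hs.1]))))
        (hg₂cc _ (fun s hs => hUmem _ (Or.inr (by linarith [hs.1]))))
        (fun s hs => (hsmall _ (by linarith [hs.1])).1)
        (fun s hs => (hsmall _ (by linarith [hs.1])).2.1)
        (fun s hs => (hsmall _ (by linarith [hs.1])).2.2)
      refine le_trans h (le_of_eq (by ring))
    have hP5 : ‖∫ s in (-1:ℝ)..(1:ℝ), Complex.exp (-Complex.I * (s:ℂ)^2) * g s‖ ≤ 2*ε' := by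
      have h := intervalIntegral.norm_integral_le_of_norm_le_const
        (C := ε') (a := (-1:ℝ)) (b := (1:ℝ))
        (f := fun s : ℝ => Complex.exp (-Complex.I * (s:ℂ)^2) * g s) ?_
      · rw [show |(1:ℝ) - (-1)| = 2 by norm_num] at h
        linarith
      · intro x hx
        rw [Set.uIoc_of_le (by norm_num : (-1:ℝ) ≤ 1)] at hx
        rw [norm_mul, phi_norm, one_mul]
        exact (hsmall _ (by linarith [hx.1])).1
    have hP6 : ‖∫ s in (1:ℝ)..R, Complex.exp (-Complex.I * (s:ℂ)^2) * g s‖ ≤ 4*ε' := by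
      have h := ibp_open g g₁ g₂ 1 R 1 ε' (by linarith) (le_refl 1)
        (fun s hs => by rw [abs_of_pos (by linarith [hs.1])]; linarith [hs.1])
        (hgc.continuousOn)
        (fun s hs => hdg s (hUmem _ (Or.inr (by linarith [hs.1]))))
        (fun s hs => hdg₁ s (hUmem _ (Or.inr (by linarith [hs.1]))))
        (hg₂cc _ (fun s hs => hUmem _ (Or.inr (by linarith [hs.1]))))
        (fun s hs => (hsmall _ (by linarith [hs.1])).1)
        (fun s hs => (hsmall _ (by linarith [hs.1])).2.1)
        (fun s hs => (hsmall _ (by linarith [hs.1])).2.2)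
      refine le_trans h (le_of_eq (by ring))
    -- assemble
    have hsplit : (∫ s in (-R)..R, Complex.exp (-Complex.I * (s:ℂ)^2) * g s)
        = (∫ s in (-R)..(-1-η), Complex.exp (-Complex.I * (s:ℂ)^2) * g s)
        + ((∫ s in (-1-η)..(1-η), Complex.exp (-Complex.I * (s:ℂ)^2) * g s)
        + ((∫ s in (1-η)..(-η/2), Complex.exp (-Complex.I * (s:ℂ)^2) * g s)
        + ((∫ s in (-η/2)..(-1), Complex.exp (-Complex.I * (s:ℂ)^2) * g s)
        + ((∫ s in (-1:ℝ)..(1:ℝ), Complex.exp (-Complex.I * (s:ℂ)^2) * g s)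
        + (∫ s in (1:ℝ)..R, Complex.exp (-Complex.I * (s:ℂ)^2) * g s))))) := by
      rw [intervalIntegral.integral_add_adjacent_intervals (hint (-1:ℝ) 1) (hint 1 R)]
      rw [intervalIntegral.integral_add_adjacent_intervals (hint (-η/2) (-1)) (hint (-1) R)]
      rw [intervalIntegral.integral_add_adjacent_intervals (hint (1-η) (-η/2)) (hint (-η/2) R)]
      rw [intervalIntegral.integral_add_adjacent_intervals (hint (-1-η) (1-η)) (hint (1-η) R)]
      rw [intervalIntegral.integral_add_adjacent_intervals (hint (-R) (-1-η)) (hint (-1-η) R)]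
    calc ‖∫ s in (-R)..R, Complex.exp (-Complex.I * (s:ℂ)^2) * f (s + η)‖
        = ‖(∫ s in (-R)..(-1-η), Complex.exp (-Complex.I * (s:ℂ)^2) * g s)
        + ((∫ s in (-1-η)..(1-η), Complex.exp (-Complex.I * (s:ℂ)^2) * g s)
        + ((∫ s in (1-η)..(-η/2), Complex.exp (-Complex.I * (s:ℂ)^2) * g s)
        + ((∫ s in (-η/2)..(-1), Complex.exp (-Complex.I * (s:ℂ)^2) * g s)
        + ((∫ s in (-1:ℝ)..(1:ℝ), Complex.exp (-Complex.I * (s:ℂ)^2) * g s)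
        + (∫ s in (1:ℝ)..R, Complex.exp (-Complex.I * (s:ℂ)^2) * g s)))))‖ := by rw [← hsplit]
      _ ≤ 4*M/η + (0 + (8*M/η + (4*ε' + (2*ε' + 4*ε')))) := by
          refine le_trans (norm_add_le _ _) (add_le_add hP1 ?_)
          refine le_trans (norm_add_le _ _) (add_le_add (by rw [hP2]; simp) ?_)
          refine le_trans (norm_add_le _ _) (add_le_add hP3 ?_)
          refine le_trans (norm_add_le _ _) (add_le_add hP4 ?_)
          exact le_trans (norm_add_le _ _) (add_le_add hP5 hP6)
      _ ≤ 12*M/η + 10*ε' := by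
          have : 4*M/η + 8*M/η = 12*M/η := by ring
          linarith
  -- pass to the limit
  have hJb : ‖J η‖ ≤ 12*M/η + 10*ε' := by
    refine le_of_tendsto (hJ η).norm ?_
    rw [eventually_atTop]
    exact ⟨η + 1, hIbound⟩
  have h48 : 48*M ≤ ε*η := by
    have := mul_le_mul_of_nonneg_left hη2 (le_of_lt hε)
    rwa [mul_div_cancel₀ _ (ne_of_gt hε)] at this
  have hfrac : 12*M/η ≤ ε/4 := by
    rw [div_le_div_iff₀ hη0 (by norm_num)]
    linarith
  have : ‖J η‖ ≤ ε/4 + ε/4 := by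
    have h10 : 10*ε' = ε/4 := by rw [hε'def]; ring
    linarith
  linarith
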